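/- For any bivariate random vector (X_1, X_2) with X_1 and X_2 real-valued and integrable, and a comonotonic coupling (X_1^c, X_2^c) = (F_{X_1}^{-1}(U), F_{X_2}^{-1}(U)) with U uniform on (0,1), one has max{X_1, X_2} ≥_{st} max{X_1^c, X_2^c}, i.e., P(max{X_1,X_2} > t) ≥ P(max{X_1^c, X_2^c} > t) for all t ∈ ℝ. -/

import Mathlib

open MeasureTheory

lemma quantile_le_of_le
    {Ω : Type*} [MeasurableSpace Ω] (P : Measure Ω) [IsProbabilityMeasure P]
    (X : Ω → ℝ) (hm : Measurable X) {u t : ℝ} (hu : 0 < u)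
    (hle : u ≤ (P {ω | X ω ≤ t}).toReal) :
    sInf {x : ℝ | u ≤ (P {ω | X ω ≤ x}).toReal} ≤ t := by
  have hmap : ∀ x : ℝ, P {ω | X ω ≤ x} = (Measure.map X P) (Set.Iic x) := by
    intro x
    rw [Measure.map_apply hm measurableSet_Iic]
    rfl
  have : IsProbabilityMeasure (Measure.map X P) :=
    Measure.isProbabilityMeasure_map hm.aemeasurable
  have hF : ∀ x : ℝ, (P {ω | X ω ≤ x}).toReal = ProbabilityTheory.cdf (Measure.map X P) x := by
    intro x
    rw [hmap, ProbabilityTheory.cdf_eq_real, measureReal_def]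
  obtain ⟨x₀, hx₀⟩ : ∃ x₀ : ℝ, (P {ω | X ω ≤ x₀}).toReal < u := by
    have h := ProbabilityTheory.tendsto_cdf_atBot (Measure.map X P)
    have := (h.eventually (eventually_lt_nhds hu)).exists
    obtain ⟨x₀, hx₀⟩ := this
    exact ⟨x₀, by rw [hF]; exact hx₀⟩
  apply csInf_le
  · refine ⟨x₀, fun x hx => ?_⟩
    by_contra h
    push_neg at h
    have hmono : (P {ω | X ω ≤ x}).toReal ≤ (P {ω | X ω ≤ x₀}).toReal := by
      apply ENNReal.toReal_mono (measure_ne_top P _)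
      exact measure_mono (fun ω hω => le_of_lt (lt_of_le_of_lt hω h))
    exact absurd (le_trans hx hmono) (not_le.mpr hx₀)
  · exact hle

/-- For any integrable bivariate random vector `(X₁, X₂)` and its comonotonic coupling
`(X₁ᶜ, X₂ᶜ) = (F_{X₁}⁻¹(U), F_{X₂}⁻¹(U))` with `U` uniform on `(0,1)`, one has
`max{X₁, X₂} ≥_st max{X₁ᶜ, X₂ᶜ}`, i.e.
`P(max{X₁ᶜ, X₂ᶜ} > t) ≤ P(max{X₁, X₂} > t)` for all `t ∈ ℝ`. -/
theorem stmt_8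
    {Ω : Type*} [MeasurableSpace Ω] (P : Measure Ω) [IsProbabilityMeasure P]
    {Ω' : Type*} [MeasurableSpace Ω'] (P' : Measure Ω') [IsProbabilityMeasure P']
    (X₁ X₂ : Ω → ℝ) (hm₁ : Measurable X₁) (hm₂ : Measurable X₂)
    (hi₁ : Integrable X₁ P) (hi₂ : Integrable X₂ P)
    (U : Ω' → ℝ) (hmU : Measurable U)
    (hU : Measure.map U P' = volume.restrict (Set.Ioo (0:ℝ) 1))
    (q : (Ω → ℝ) → ℝ → ℝ)
    (hq : ∀ (X : Ω → ℝ) (u : ℝ), q X u = sInf {x : ℝ | u ≤ (P {ω | X ω ≤ x}).toReal}) :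
    ∀ t : ℝ,
      P' {ω' | t < max (q X₁ (U ω')) (q X₂ (U ω'))} ≤ P {ω | t < max (X₁ ω) (X₂ ω)} := by
  intro t
  set F₁ : ℝ := (P {ω | X₁ ω ≤ t}).toReal with hF₁
  set F₂ : ℝ := (P {ω | X₂ ω ≤ t}).toReal with hF₂
  set m : ℝ := min F₁ F₂ with hm
  have hm0 : 0 ≤ m := le_min ENNReal.toReal_nonneg ENNReal.toReal_nonneg
  -- Step 1 : inclusion
  have hA : {ω' | t < max (q X₁ (U ω')) (q X₂ (U ω'))} ⊆
      U ⁻¹' (Set.Ioi m) ∪ U ⁻¹' (Set.Ioo (0:ℝ) 1)ᶜ := by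
    intro ω' hω'
    by_cases hmem : U ω' ∈ Set.Ioo (0:ℝ) 1
    · left
      simp only [Set.mem_setOf_eq, lt_max_iff] at hω'
      rcases hω' with h | h
      · have : F₁ < U ω' := by
          by_contra hc
          push_neg at hc
          have := quantile_le_of_le P X₁ hm₁ hmem.1 hc
          rw [← hq X₁ (U ω')] at this
          exact absurd this (not_le.mpr h)
        exact lt_of_le_of_lt (min_le_left _ _) this
      · have : F₂ < U ω' := by
          by_contra hc
          push_neg at hc
          have := quantile_le_of_le P X₂ hm₂ hmem.1 hc
          rw [← hq X₂ (U ω')] at this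
          exact absurd this (not_le.mpr h)
        exact lt_of_le_of_lt (min_le_right _ _) this
    · right; exact hmem
  -- Step 2 : measure bound of the left side
  have h1 : P' (U ⁻¹' (Set.Ioi m)) ≤ ENNReal.ofReal (1 - m) := by
    rw [← Measure.map_apply hmU measurableSet_Ioi, hU,
      Measure.restrict_apply measurableSet_Ioi]
    calc volume (Set.Ioi m ∩ Set.Ioo 0 1) ≤ volume (Set.Ioo m 1) := by
          apply measure_mono
          rintro x ⟨hx1, hx2⟩
          exact ⟨hx1, hx2.2⟩
      _ = ENNReal.ofReal (1 - m) := Real.volume_Ioo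
  have h2 : P' (U ⁻¹' (Set.Ioo (0:ℝ) 1)ᶜ) = 0 := by
    rw [← Measure.map_apply hmU measurableSet_Ioo.compl, hU,
      Measure.restrict_apply measurableSet_Ioo.compl]
    simp
  have hleft : P' {ω' | t < max (q X₁ (U ω')) (q X₂ (U ω'))} ≤ ENNReal.ofReal (1 - m) := by
    calc P' {ω' | t < max (q X₁ (U ω')) (q X₂ (U ω'))}
        ≤ P' (U ⁻¹' (Set.Ioi m) ∪ U ⁻¹' (Set.Ioo (0:ℝ) 1)ᶜ) := measure_mono hA
      _ ≤ P' (U ⁻¹' (Set.Ioi m)) + P' (U ⁻¹' (Set.Ioo (0:ℝ) 1)ᶜ) := measure_union_le _ _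
      _ = P' (U ⁻¹' (Set.Ioi m)) := by rw [h2, add_zero]
      _ ≤ ENNReal.ofReal (1 - m) := h1
  -- Step 3 : lower bound of the right side
  have key : ∀ (X : Ω → ℝ), Measurable X →
      ENNReal.ofReal (1 - (P {ω | X ω ≤ t}).toReal) = P {ω | t < X ω} := by
    intro X hmX
    have hms : MeasurableSet {ω | X ω ≤ t} := hmX measurableSet_Iic
    have hcomp : {ω | t < X ω} = {ω | X ω ≤ t}ᶜ := by
      ext ω; simp [not_le]
    rw [hcomp, measure_compl hms (measure_ne_top P _), measure_univ,
      ENNReal.ofReal_sub _ ENNReal.toReal_nonneg,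
      ENNReal.ofReal_one, ENNReal.ofReal_toReal (measure_ne_top P _)]
  have hright : ENNReal.ofReal (1 - m) ≤ P {ω | t < max (X₁ ω) (X₂ ω)} := by
    rcases le_total F₁ F₂ with h | h
    · have hmm : m = F₁ := min_eq_left h
      rw [hmm, key X₁ hm₁]
      exact measure_mono (fun ω (hω : t < X₁ ω) => show t < max (X₁ ω) (X₂ ω) from lt_of_lt_of_le hω (le_max_left _ _))
    · have hmm : m = F₂ := min_eq_right h
      rw [hmm, key X₂ hm₂]
      exact measure_mono (fun ω (hω : t < X₂ ω) => show t < max (X₁ ω) (X₂ ω) from lt_of_lt_of_le hω (le_max_right _ _))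
  exact le_trans hleft hright
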